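/- arXiv:2407.16413 — 2 statements merged into one kernel-verified Lean document; each statement's English description precedes it below -/
import Mathlib

section
/- Let A ∈ ℝ^{m×n}, x̄ ∈ ℝ^n, and let R : ℝ^n → ℝ ∪ {+∞} be proper and lower semicontinuous. Assume: (i) there exists x ∈ dom(R) with |Ax| = √ȳ entrywise; (ii) R is non-negative; (iii) Ker(R_∞) ∩ Ker(A) = {0}, where R_∞ is the asymptotic function of R. Then the set of minimizers of R over {x ∈ ℝ^n : |Ax| = √ȳ entrywise} is non-empty and compact. -/
open MeasureTheory ProbabilityTheory Filter
open scoped NNReal ENNReal BigOperators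

noncomputable section

/-- The Euclidean (`ℓ²`) norm on `Fin n → ℝ`. -/
def enorm2 {n : ℕ} (x : Fin n → ℝ) : ℝ := Real.sqrt (∑ i, x i ^ 2)

/-- Matrix-vector multiplication for `A ∈ ℝ^{m×n}`. -/
def mulVec' {m n : ℕ} (A : Fin m → Fin n → ℝ) (x : Fin n → ℝ) : Fin m → ℝ :=
  fun i => ∑ j, A i j * x j

/-- The asymptotic (recession) function `R_∞(z) = liminf_{z'→z, t→∞} R(t z')/t`. -/
def asympFun {n : ℕ} (R : (Fin n → ℝ) → EReal) (z : Fin n → ℝ) : EReal :=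
  Filter.liminf (fun p : (Fin n → ℝ) × ℝ => R (p.2 • p.1) * ((p.2⁻¹ : ℝ) : EReal))
    ((nhds z) ×ˢ Filter.atTop)

/-- The noiseless feasible set `{x : |Ax| = √ȳ entrywise}`. -/
def feasSet {m n : ℕ} (A : Fin m → Fin n → ℝ) (ybar : Fin m → ℝ) : Set (Fin n → ℝ) :=
  {x | ∀ r, |mulVec' A x r| = Real.sqrt (ybar r)}

/-- Set of minimizers of `R` over `S`. -/
def argminOn {α β : Type*} [Preorder β] (R : α → β) (S : Set α) : Set α :=
  {x ∈ S | ∀ z ∈ S, R x ≤ R z}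

/-- Convexity for `EReal`-valued functions. -/
def ERealConvex {n : ℕ} (R : (Fin n → ℝ) → EReal) : Prop :=
  ∀ x y : Fin n → ℝ, ∀ a b : ℝ, 0 ≤ a → 0 ≤ b → a + b = 1 →
    R (a • x + b • y) ≤ (a : EReal) * R x + (b : EReal) * R y

/-- Descent cone of `R` at `x̄`. -/
def descentCone {n : ℕ} {β : Type*} [Preorder β] (R : (Fin n → ℝ) → β)
    (xbar : Fin n → ℝ) : Set (Fin n → ℝ) :=
  {z | ∃ t : ℝ, 0 < t ∧ R (xbar + t • z) ≤ R xbar}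

/-- Euclidean unit sphere of `ℝⁿ`. -/
def unitSphere (n : ℕ) : Set (Fin n → ℝ) := {x | enorm2 x = 1}

/-- The constant ν = (1/18)√(π/2). -/
def nu : ℝ := (1 / 18) * Real.sqrt (Real.pi / 2)

/-- Law of a random `m × n` matrix with i.i.d. `N(0, 1/m)` entries. -/
def gaussMatrix (m n : ℕ) : Measure (Fin m → Fin n → ℝ) :=
  Measure.pi fun _ => Measure.pi fun _ => gaussianReal 0 (m : ℝ≥0)⁻¹

/-- Standard Gaussian vector `N(0, Id_n)`. -/
def gaussVec (n : ℕ) : Measure (Fin n → ℝ) := Measure.pi fun _ => gaussianReal 0 1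

/-- Dot product. -/
def dot {n : ℕ} (x y : Fin n → ℝ) : ℝ := ∑ i, x i * y i

/-- Gaussian width of S. -/
def gaussianWidth {n : ℕ} (S : Set (Fin n → ℝ)) : ℝ :=
  ∫ z, sSup ((fun x => dot z x) '' S) ∂(gaussVec n)

/-- `‖A^I x‖₂` : ℓ² norm of the rows of `Ax` indexed by `I`. -/
def rowNorm {m n : ℕ} (A : Fin m → Fin n → ℝ) (I : Finset (Fin m)) (x : Fin n → ℝ) : ℝ :=
  Real.sqrt (∑ i ∈ I, (mulVec' A x i) ^ 2)

/-- Covering number `N(S, δ)` by Euclidean balls of radius `δ` centered in `S`. -/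
def coveringNumber {n : ℕ} (S : Set (Fin n → ℝ)) (δ : ℝ) : ℕ :=
  sInf {k : ℕ | ∃ T : Finset (Fin n → ℝ), T.card = k ∧ ↑T ⊆ S ∧
    S ⊆ ⋃ c ∈ T, {x | enorm2 (x - c) ≤ δ}}

/-- Constrained (Mozorov) feasible set `{x : ‖y − |Ax|²‖₂ ≤ ρ}`. -/
def feasConst {m n : ℕ} (A : Fin m → Fin n → ℝ) (y : Fin m → ℝ) (ρ : ℝ) :
    Set (Fin n → ℝ) :=
  {x | enorm2 (fun i => y i - (mulVec' A x i) ^ 2) ≤ ρ}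

/-- Penalized (Tikhonov) objective `F_{y,λ}(x) = ‖y − |Ax|²‖₂² + λ R(x)`. -/
def Fpen {m n : ℕ} (A : Fin m → Fin n → ℝ) (y : Fin m → ℝ) (lam : ℝ)
    (R : (Fin n → ℝ) → EReal) (x : Fin n → ℝ) : EReal :=
  ((enorm2 (fun i => y i - (mulVec' A x i) ^ 2) ^ 2 : ℝ) : EReal) + (lam : EReal) * R x


/-- A lower semicontinuous `EReal`-valued function attains its minimum on a
nonempty compact set. -/
lemma lsc_exists_min {α : Type*} [TopologicalSpace α] [T2Space α] {K : Set α}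
    (hK : IsCompact K) (hne : K.Nonempty) {f : α → EReal} (hf : LowerSemicontinuous f) :
    ∃ x ∈ K, ∀ y ∈ K, f x ≤ f y := by
  have hι : Nonempty K := hne.to_subtype
  set S : K → Set α := fun y => K ∩ {x | f x ≤ f y.1} with hS
  have hScl : ∀ y : K, IsClosed (S y) :=
    fun y => hK.isClosed.inter (hf.isClosed_preimage (f y.1))
  have hScpt : ∀ y : K, IsCompact (S y) :=
    fun y => hK.inter_right (hf.isClosed_preimage (f y.1))
  have hSne : ∀ y : K, (S y).Nonempty := fun y => ⟨y.1, y.2, show f y.1 ≤ f y.1 from le_refl _⟩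
  have hdir : Directed (· ⊇ ·) S := by
    intro y₁ y₂
    rcases le_total (f y₁.1) (f y₂.1) with h | h
    · exact ⟨y₁, subset_rfl, fun x hx => ⟨hx.1, le_trans hx.2 h⟩⟩
    · exact ⟨y₂, fun x hx => ⟨hx.1, le_trans hx.2 h⟩, subset_rfl⟩
  obtain ⟨x, hx⟩ :=
    IsCompact.nonempty_iInter_of_directed_nonempty_isCompact_isClosed S hdir hSne hScpt hScl
  rw [Set.mem_iInter] at hx
  obtain ⟨y₀⟩ := hι
  exact ⟨x, (hx y₀).1, fun y hy => (hx ⟨y, hy⟩).2⟩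

lemma mulVec'_smul {m n : ℕ} (A : Fin m → Fin n → ℝ) (c : ℝ) (x : Fin n → ℝ) (r : Fin m) :
    mulVec' A (c • x) r = c * mulVec' A x r := by
  simp [mulVec', Finset.mul_sum]
  exact Finset.sum_congr rfl fun j _ => by ring

lemma mulVec'_continuous {m n : ℕ} (A : Fin m → Fin n → ℝ) (r : Fin m) :
    Continuous fun x : Fin n → ℝ => mulVec' A x r :=
  continuous_finset_sum _ fun j _ => continuous_const.mul (continuous_apply j)

/-- existence and compactness of the set of minimizers of the noiseless
regularized phase retrieval problem. -/
theorem statement0 {m n : ℕ} (A : Fin m → Fin n → ℝ) (xbar : Fin n → ℝ)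
    (R : (Fin n → ℝ) → EReal)
    (hRbot : ∀ x, R x ≠ ⊥)
    (hRproper : ∃ x, R x ≠ ⊤)
    (hRlsc : LowerSemicontinuous R)
    (hfeas : ∃ x, R x ≠ ⊤ ∧ x ∈ feasSet A (fun r => (mulVec' A xbar r) ^ 2))
    (hRnonneg : ∀ x, 0 ≤ R x)
    (hker : {z : Fin n → ℝ | asympFun R z = 0} ∩ {z | mulVec' A z = 0} = {0}) :
    (argminOn R (feasSet A (fun r => (mulVec' A xbar r) ^ 2))).Nonempty ∧
      IsCompact (argminOn R (feasSet A (fun r => (mulVec' A xbar r) ^ 2))) := by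
  obtain ⟨x₀, hx₀top, hx₀S⟩ := hfeas
  set ybar : Fin m → ℝ := fun r => (mulVec' A xbar r) ^ 2 with hybar
  set S : Set (Fin n → ℝ) := feasSet A ybar with hSdef
  -- S is closed
  have hScl : IsClosed S := by
    have : S = ⋂ r, {x : Fin n → ℝ | |mulVec' A x r| = Real.sqrt (ybar r)} := by
      ext x; simp [hSdef, feasSet, Set.mem_iInter]
    rw [this]
    exact isClosed_iInter fun r =>
      isClosed_eq (mulVec'_continuous A r).abs continuous_const
  -- the sublevel set within S
  set c : EReal := R x₀ with hc
  set K : Set (Fin n → ℝ) := S ∩ {x | R x ≤ c} with hK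
  have hKcl : IsClosed K := hScl.inter (hRlsc.isClosed_preimage c)
  have hx₀K : x₀ ∈ K := ⟨hx₀S, show R x₀ ≤ c from le_refl _⟩
  -- K is bounded
  have hKb : Bornology.IsBounded K := by
    by_contra hb
    rw [isBounded_iff_forall_norm_le] at hb
    push_neg at hb
    have hex : ∀ k : ℕ, ∃ x, x ∈ K ∧ (k : ℝ) < ‖x‖ := by
      intro k
      obtain ⟨x, hxK, hx⟩ := hb (k : ℝ)
      exact ⟨x, hxK, hx⟩
    choose xs hxsK hxs using hex
    set t : ℕ → ℝ := fun k => ‖xs k‖ with ht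
    have htpos : ∀ k, 0 < t k := fun k => lt_of_le_of_lt (Nat.cast_nonneg k) (hxs k)
    set z : ℕ → Fin n → ℝ := fun k => (t k)⁻¹ • xs k with hz
    have hznorm : ∀ k, ‖z k‖ = 1 := by
      intro k
      rw [hz]
      rw [norm_smul, norm_inv, Real.norm_eq_abs, abs_of_pos (htpos k)]
      exact inv_mul_cancel₀ (ne_of_gt (htpos k))
    have hzsph : ∀ k, z k ∈ Metric.sphere (0 : Fin n → ℝ) 1 := by
      intro k; rw [mem_sphere_zero_iff_norm]; exact hznorm k
    obtain ⟨zl, hzl, φ, hφ, hφt⟩ :=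
      (isCompact_sphere (0 : Fin n → ℝ) 1).tendsto_subseq hzsph
    -- the scaled sequence tends to atTop
    have httop : Tendsto (fun k => t (φ k)) atTop atTop := by
      apply tendsto_atTop_mono (fun k => ?_) tendsto_natCast_atTop_atTop
      calc (k : ℝ) ≤ (φ k : ℝ) := Nat.cast_le.2 (hφ.le_apply)
        _ ≤ t (φ k) := le_of_lt (hxs (φ k))
    have htinv : Tendsto (fun k => (t (φ k))⁻¹) atTop (nhds (0 : ℝ)) :=
      tendsto_inv_atTop_zero.comp httop
    -- A zl = 0
    have hAz : mulVec' A zl = 0 := by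
      funext r
      have h1 : ∀ k, |mulVec' A (z k) r| = (t k)⁻¹ * Real.sqrt (ybar r) := by
        intro k
        rw [hz, mulVec'_smul, abs_mul, abs_of_nonneg (inv_nonneg.2 (le_of_lt (htpos k))),
          (hxsK k).1 r]
      have h2 : Tendsto (fun k => |mulVec' A (z (φ k)) r|) atTop (nhds 0) := by
        simp only [fun k => h1 (φ k)]
        have := htinv.mul_const (Real.sqrt (ybar r))
        simpa using this
      have h3 : Tendsto (fun k => |mulVec' A (z (φ k)) r|) atTop
          (nhds |mulVec' A zl r|) :=
        (((mulVec'_continuous A r).abs).continuousAt.tendsto).comp hφt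
      have := tendsto_nhds_unique h3 h2
      simpa [abs_eq_zero] using this
    -- the asymptotic function vanishes at zl
    have hasymp : asympFun R zl = 0 := by
      refine le_antisymm ?_ ?_
      · -- liminf ≤ 0 along the subsequence
        have hmap : Tendsto (fun k => (z (φ k), t (φ k))) atTop ((nhds zl) ×ˢ atTop) :=
          hφt.prodMk httop
        have hle1 : asympFun R zl ≤
            liminf (fun k => R (t (φ k) • z (φ k)) * (((t (φ k))⁻¹ : ℝ) : EReal)) atTop := by
          rw [asympFun]
          refine le_trans (liminf_le_liminf_of_le hmap) ?_
          rw [← Filter.liminf_comp]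
          exact le_refl _
        refine le_trans hle1 ?_
        -- rewrite t • z = xs
        have hsmul : ∀ k, t (φ k) • z (φ k) = xs (φ k) := by
          intro k
          rw [hz, smul_smul, mul_inv_cancel₀ (ne_of_gt (htpos (φ k))), one_smul]
        set c₀ : ℝ := c.toReal with hc₀
        have hc₀c : (c₀ : EReal) = c := EReal.coe_toReal hx₀top (hRbot x₀)
        have hbound : ∀ k, R (t (φ k) • z (φ k)) * (((t (φ k))⁻¹ : ℝ) : EReal) ≤
            ((c₀ * (t (φ k))⁻¹ : ℝ) : EReal) := by
          intro k
          rw [EReal.coe_mul, hsmul k]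
          refine mul_le_mul_of_nonneg_right ?_ ?_
          · rw [hc₀c]; exact (hxsK (φ k)).2
          · exact_mod_cast inv_nonneg.2 (le_of_lt (htpos (φ k)))
        have hlim0 : Tendsto (fun k => ((c₀ * (t (φ k))⁻¹ : ℝ) : EReal)) atTop
            (nhds (0 : EReal)) := by
          have : Tendsto (fun k => (c₀ * (t (φ k))⁻¹ : ℝ)) atTop (nhds 0) := by
            have := htinv.const_mul c₀
            simpa using this
          have := (EReal.tendsto_coe (a := (0 : ℝ))).2 this
          simpa using this
        calc liminf (fun k => R (t (φ k) • z (φ k)) * (((t (φ k))⁻¹ : ℝ) : EReal)) atTop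
            ≤ liminf (fun k => ((c₀ * (t (φ k))⁻¹ : ℝ) : EReal)) atTop :=
              Filter.liminf_le_liminf (Eventually.of_forall hbound)
          _ = 0 := hlim0.liminf_eq
      · -- 0 ≤ liminf since R ≥ 0 and t ≥ 0 eventually
        refine Filter.le_liminf_of_le (by isBoundedDefault) ?_
        have hev : ∀ᶠ p : (Fin n → ℝ) × ℝ in (nhds zl) ×ˢ atTop, 0 ≤ p.2 :=
          (eventually_ge_atTop (0 : ℝ)).prod_inr _
        filter_upwards [hev] with p hp
        exact mul_nonneg (hRnonneg _) (by exact_mod_cast inv_nonneg.2 hp)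
    -- contradiction: zl = 0 but ‖zl‖ = 1
    have hzl0 : zl = 0 := by
      have : zl ∈ ({z : Fin n → ℝ | asympFun R z = 0} ∩ {z | mulVec' A z = 0}) :=
        ⟨hasymp, hAz⟩
      rw [hker] at this
      exact this
    have : ‖zl‖ = 1 := mem_sphere_zero_iff_norm.1 hzl
    rw [hzl0, norm_zero] at this
    exact one_ne_zero this.symm
  -- K compact
  have hKcpt : IsCompact K := Metric.isCompact_of_isClosed_isBounded hKcl hKb
  -- minimize R on K
  obtain ⟨xs, hxsK, hxsmin⟩ := lsc_exists_min hKcpt ⟨x₀, hx₀K⟩ hRlsc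
  have hmin : ∀ y ∈ S, R xs ≤ R y := by
    intro y hy
    rcases le_or_gt (R y) c with h | h
    · exact hxsmin y ⟨hy, h⟩
    · exact le_trans (hxsmin x₀ hx₀K) h.le
  have hargmin : argminOn R S = S ∩ {x | R x ≤ R xs} := by
    ext x
    constructor
    · rintro ⟨hxS, hx⟩
      exact ⟨hxS, hx xs hxsK.1⟩
    · rintro ⟨hxS, hx⟩
      exact ⟨hxS, fun z hz => le_trans hx (hmin z hz)⟩
  constructor
  · exact ⟨xs, hxsK.1, hmin⟩
  · rw [hargmin]
    refine IsCompact.of_isClosed_subset hKcpt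
      (hScl.inter (hRlsc.isClosed_preimage (R xs))) ?_
    rintro x ⟨hxS, hx⟩
    exact ⟨hxS, le_trans hx (hxsmin x₀ hx₀K)⟩


end
end

section
/- Let A ∈ ℝ^{m×n}, x̄ ∈ ℝ^n, and suppose the set of minimizers of R over {x : |Ax| = √ȳ entrywise} is non-empty. Assume: (H.1) R is proper, lower semicontinuous, convex, and even symmetric (R(−x) = R(x) for all x); (H.2) for every subset I ⊆ {1,…,m} with |I| ≥ m/2, Ker(A^I) ∩ D_R(x̄) = {0}. Then the set of minimizers of R over {x : |Ax| = √ȳ entrywise} equals {x̄, −x̄}. -/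
open MeasureTheory ProbabilityTheory Filter
open scoped NNReal ENNReal BigOperators

noncomputable section

lemma mulVec'_sub {m n : ℕ} (A : Fin m → Fin n → ℝ) (x y : Fin n → ℝ) (i : Fin m) :
    mulVec' A (x - y) i = mulVec' A x i - mulVec' A y i := by
  simp [mulVec', mul_sub, Finset.sum_sub_distrib]

lemma mulVec'_neg {m n : ℕ} (A : Fin m → Fin n → ℝ) (x : Fin n → ℝ) (i : Fin m) :
    mulVec' A (-x) i = -(mulVec' A x i) := by
  simp [mulVec', mul_comm]

/-- exact recovery up to global sign under (H.1) and (H.2). -/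
theorem statement1 {m n : ℕ} (A : Fin m → Fin n → ℝ) (xbar : Fin n → ℝ)
    (R : (Fin n → ℝ) → EReal)
    (hnonempty : (argminOn R (feasSet A (fun r => (mulVec' A xbar r) ^ 2))).Nonempty)
    (hRbot : ∀ x, R x ≠ ⊥)
    (hRproper : ∃ x, R x ≠ ⊤)
    (hRlsc : LowerSemicontinuous R)
    (hRconv : ERealConvex R)
    (hReven : ∀ x, R (-x) = R x)
    (hH2 : ∀ I : Finset (Fin m), (m : ℝ) / 2 ≤ I.card →
      {z : Fin n → ℝ | ∀ i ∈ I, mulVec' A z i = 0} ∩ descentCone R xbar = {0}) :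
    argminOn R (feasSet A (fun r => (mulVec' A xbar r) ^ 2)) = {xbar, -xbar} := by
  set S := feasSet A (fun r => (mulVec' A xbar r) ^ 2) with hS
  have hfeas_xbar : xbar ∈ S := by
    intro r; rw [Real.sqrt_sq_eq_abs]
  have hfeas_neg : -xbar ∈ S := by
    intro r; rw [Real.sqrt_sq_eq_abs, mulVec'_neg, abs_neg]
  have key : ∀ x ∈ argminOn R S, x = xbar ∨ x = -xbar := by
    rintro x ⟨hxfeas, hxmin⟩
    have hRx : R x ≤ R xbar := hxmin xbar hfeas_xbar
    have habs : ∀ i, mulVec' A x i = mulVec' A xbar i ∨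
        mulVec' A x i = -(mulVec' A xbar i) := by
      intro i
      have h := hxfeas i
      rw [Real.sqrt_sq_eq_abs] at h
      exact abs_eq_abs.mp h
    set p := Finset.univ.filter (fun i => mulVec' A x i = mulVec' A xbar i) with hp
    set q := Finset.univ.filter (fun i => mulVec' A x i = -(mulVec' A xbar i)) with hq
    have hunion : p ∪ q = Finset.univ := by
      ext i
      simp only [hp, hq, Finset.mem_union, Finset.mem_filter, Finset.mem_univ, true_and,
        iff_true]
      exact habs i
    have hcard : (m : ℝ) ≤ p.card + q.card := by
      have h1 := Finset.card_union_le p q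
      rw [hunion, Finset.card_univ, Fintype.card_fin] at h1
      exact_mod_cast h1
    by_cases hcase : (m : ℝ) / 2 ≤ p.card
    · left
      have h0 := hH2 p hcase
      have hz : (x - xbar) ∈ {z : Fin n → ℝ | ∀ i ∈ p, mulVec' A z i = 0} ∩
          descentCone R xbar := by
        constructor
        · intro i hi
          rw [mulVec'_sub]
          have := (Finset.mem_filter.mp hi).2
          linarith
        · refine ⟨1, one_pos, ?_⟩
          have : xbar + (1 : ℝ) • (x - xbar) = x := by
            rw [one_smul]; abel
          rw [this]; exact hRx
      rw [h0] at hz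
      have : x - xbar = 0 := hz
      exact sub_eq_zero.mp this
    · right
      have hcase2 : (m : ℝ) / 2 ≤ q.card := by
        push_neg at hcase; linarith
      have h0 := hH2 q hcase2
      have hz : (-x - xbar) ∈ {z : Fin n → ℝ | ∀ i ∈ q, mulVec' A z i = 0} ∩
          descentCone R xbar := by
        constructor
        · intro i hi
          rw [mulVec'_sub, mulVec'_neg]
          have := (Finset.mem_filter.mp hi).2
          linarith
        · refine ⟨1, one_pos, ?_⟩
          have heq : xbar + (1 : ℝ) • (-x - xbar) = -x := by
            rw [one_smul]; abel
          rw [heq, hReven]; exact hRx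
      rw [h0] at hz
      have h1 : -x - xbar = 0 := hz
      have : -x = xbar := by
        have := sub_eq_zero.mp h1; exact this
      simpa [neg_eq_iff_eq_neg] using this
  obtain ⟨xs, hxs⟩ := hnonempty
  have hxsval : R xs = R xbar := by
    rcases key xs hxs with h | h
    · rw [h]
    · rw [h, hReven]
  have hmin : ∀ z ∈ S, R xbar ≤ R z := by
    intro z hz
    rw [← hxsval]
    exact hxs.2 z hz
  ext x
  constructor
  · intro hx
    rcases key x hx with h | h
    · left; exact h
    · right; exact h
  · rintro (rfl | rfl)
    · exact ⟨hfeas_xbar, hmin⟩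
    · refine ⟨hfeas_neg, ?_⟩
      intro z hz
      rw [hReven]
      exact hmin z hz

end
end
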